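/- Let {S_i}_{i∈I} be a finite family of communicating systems over pairwise disjoint participant sets, let H = {h_i}_{i∈I} be a set of interfaces for it such that every interface h_i has no mixed states, let CM be a connection model for H, and let K be a connection policy for H complying with CM. If every S_i (i ∈ I) is reception-error free and K is reception-error free, then the multicomposition MC({S_i}_{i∈I}, K) is reception-error free. -/

import Mathlib

namespace CFSM

/-- Direction of a communication action: output (`!`) or input (`?`). -/
inductive Dir : Type where
  | out : Dir
  | inp : Dir
deriving DecidableEq

instance : Fintype Dir :=
  ⟨{Dir.out, Dir.inp}, fun x => by cases x <;> simp⟩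

/-- An action `pq!a` (output) or `pq?a` (input) over participants `P` and messages `A`:
`snd` is the sender `p`, `rcv` the receiver `q`, `msg` the message `a`. -/
structure Act (P : Type) (A : Type) : Type where
  snd : P
  rcv : P
  dir : Dir
  msg : A

instance {P A : Type} [Finite P] [Finite A] : Finite (Act P A) :=
  Finite.of_injective (fun l => (l.snd, l.rcv, l.dir, l.msg))
    (fun a b h => by
      cases a; cases b
      simp only [Prod.mk.injEq] at h
      obtain ⟨h1, h2, h3, h4⟩ := h
      subst h1; subst h2; subst h3; subst h4; rfl)

/-- The subject of an action: the sender of an output, the receiver of an input. -/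
def Act.subject {P A : Type} (l : Act P A) : P :=
  match l.dir with
  | .out => l.snd
  | .inp => l.rcv

/-- A communicating system over participants `P` and messages `A`:
one machine (state type, initial state and transition relation) per participant. -/
structure CS (P : Type) (A : Type) : Type 1 where
  St : P → Type
  init : ∀ p, St p
  delta : ∀ p, Set (St p × Act P A × St p)

/-- All actions of the machine of participant `p` have subject `p`
(the name of the machine) and distinct endpoints. -/
def CS.WellFormed {P A : Type} (S : CS P A) : Prop :=
  ∀ p t, t ∈ S.delta p → ((t.2.1 : Act P A).subject = p ∧ t.2.1.snd ≠ t.2.1.rcv)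

/-- A configuration: a local state for each machine and a FIFO buffer
for each ordered pair of participants. -/
structure Config {P A : Type} (S : CS P A) : Type where
  st : ∀ p, S.St p
  ch : P → P → List A

/-- The initial configuration: all machines in their initial state, all channels empty. -/
def CS.initConfig {P A : Type} (S : CS P A) : Config S :=
  ⟨S.init, fun _ _ => []⟩

/-- The labelled transition relation between configurations. -/
def StepL {P A : Type} (S : CS P A) (c : Config S) (l : Act P A) (c' : Config S) : Prop :=
  match l.dir with
  | .out =>
      (c.st l.snd, l, c'.st l.snd) ∈ S.delta l.snd ∧
      (∀ p, p ≠ l.snd → c'.st p = c.st p) ∧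
      c'.ch l.snd l.rcv = c.ch l.snd l.rcv ++ [l.msg] ∧
      (∀ p q, (p, q) ≠ (l.snd, l.rcv) → c'.ch p q = c.ch p q)
  | .inp =>
      (c.st l.rcv, l, c'.st l.rcv) ∈ S.delta l.rcv ∧
      (∀ p, p ≠ l.rcv → c'.st p = c.st p) ∧
      c.ch l.snd l.rcv = l.msg :: c'.ch l.snd l.rcv ∧
      (∀ p q, (p, q) ≠ (l.snd, l.rcv) → c'.ch p q = c.ch p q)

/-- Unlabelled transition relation. -/
def Step {P A : Type} (S : CS P A) (c c' : Config S) : Prop :=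
  ∃ l, StepL S c l c'

/-- Reachability between configurations. -/
def Reach {P A : Type} (S : CS P A) : Config S → Config S → Prop :=
  Relation.ReflTransGen (Step S)

/-- The set of configurations reachable from the initial configuration. -/
def RC {P A : Type} (S : CS P A) : Set (Config S) :=
  {c | Reach S S.initConfig c}

/-- A local state is final if it has no outgoing transition. -/
def FinalSt {Q P A : Type} (δ : Set (Q × Act P A × Q)) (q : Q) : Prop :=
  ∀ l q', (q, l, q') ∉ δ

/-- A local state is receiving if it is not final and all its outgoing
transitions are labelled with input actions. -/
def ReceivingSt {Q P A : Type} (δ : Set (Q × Act P A × Q)) (q : Q) : Prop :=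
  (∃ l q', (q, l, q') ∈ δ) ∧ ∀ l q', (q, l, q') ∈ δ → (l : Act P A).dir = Dir.inp

/-- A local state is mixed if it has at least one outgoing output-labelled
transition and at least one outgoing input-labelled transition. -/
def MixedSt {Q P A : Type} (δ : Set (Q × Act P A × Q)) (q : Q) : Prop :=
  (∃ l q', (q, l, q') ∈ δ ∧ (l : Act P A).dir = Dir.out) ∧
  (∃ l q', (q, l, q') ∈ δ ∧ (l : Act P A).dir = Dir.inp)

/-- A machine has no mixed states. -/
def NoMixed {Q P A : Type} (δ : Set (Q × Act P A × Q)) : Prop :=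
  ∀ q, ¬ MixedSt δ q

/-- Deadlock configuration: all channels empty but all machines in receiving states. -/
def DeadlockConfig {P A : Type} (S : CS P A) (c : Config S) : Prop :=
  (∀ p q, c.ch p q = []) ∧ ∀ p, ReceivingSt (S.delta p) (c.st p)

def DeadlockFree {P A : Type} (S : CS P A) : Prop :=
  ∀ c ∈ RC S, ¬ DeadlockConfig S c

/-- Orphan-message configuration: all machines final but some channel nonempty. -/
def OrphanConfig {P A : Type} (S : CS P A) (c : Config S) : Prop :=
  (∀ p, FinalSt (S.delta p) (c.st p)) ∧ ∃ p q, c.ch p q ≠ []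

def OrphanFree {P A : Type} (S : CS P A) : Prop :=
  ∀ c ∈ RC S, ¬ OrphanConfig S c

/-- Unspecified reception configuration: some machine `r` is in a receiving state and,
for every input transition of `r`, the corresponding channel is nonempty with a
first element different from the expected message. -/
def URConfig {P A : Type} (S : CS P A) (c : Config S) : Prop :=
  ∃ r, ReceivingSt (S.delta r) (c.st r) ∧
    ∀ s a q', (c.st r, Act.mk s r Dir.inp a, q') ∈ S.delta r →
      (c.ch s r ≠ [] ∧ ¬ ∃ w, c.ch s r = a :: w)

def ReceptionErrorFree {P A : Type} (S : CS P A) : Prop :=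
  ∀ c ∈ RC S, ¬ URConfig S c

/-- Progress: every reachable configuration has an outgoing transition or all
machines are in final states. -/
def ProgressProp {P A : Type} (S : CS P A) : Prop :=
  ∀ c ∈ RC S, (∃ c', Step S c c') ∨ ∀ p, FinalSt (S.delta p) (c.st p)

/-- `p`-lock configuration: `p` is in a receiving state and never occurs as the
subject of an action in any transition sequence from `c`. -/
def PLockConfig {P A : Type} (S : CS P A) (c : Config S) (p : P) : Prop :=
  ReceivingSt (S.delta p) (c.st p) ∧
  ∀ c1 l c2, Reach S c c1 → StepL S c1 l c2 → l.subject ≠ p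

def LockFree {P A : Type} (S : CS P A) : Prop :=
  ∀ c ∈ RC S, ∀ p, ¬ PLockConfig S c p

section Composition

variable {I : Type} {P : I → Type} {A : Type}

/-- Messages occurring in input actions of the machine of `p`. -/
def inMsgs {Pp A : Type} (S : CS Pp A) (p : Pp) : Set A :=
  {a | ∃ q s q', (q, Act.mk s p Dir.inp a, q') ∈ S.delta p}

/-- Messages occurring in output actions of the machine of `p`. -/
def outMsgs {Pp A : Type} (S : CS Pp A) (p : Pp) : Set A :=
  {a | ∃ q r q', (q, Act.mk p r Dir.out a, q') ∈ S.delta p}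

/-- `CM` is a connection model for the interfaces `hh i` of the family `S`
(the interface `h_i` is represented by its index `i`). -/
def IsConnModel (S : ∀ i, CS (P i) A) (hh : ∀ i, P i) (CM : Set (I × A × I)) : Prop :=
  ∀ i a,
    (a ∈ inMsgs (S i) (hh i) →
      ∃ j, j ≠ i ∧ a ∈ outMsgs (S j) (hh j) ∧ (i, a, j) ∈ CM) ∧
    (a ∈ outMsgs (S i) (hh i) →
      ∃ j, j ≠ i ∧ a ∈ inMsgs (S j) (hh j) ∧ (j, a, i) ∈ CM)

/-- `CM` is a strong connection model: additionally the connecting partner is unique. -/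
def IsStrongConnModel (S : ∀ i, CS (P i) A) (hh : ∀ i, P i) (CM : Set (I × A × I)) : Prop :=
  IsConnModel S hh CM ∧
  ∀ i a,
    (a ∈ inMsgs (S i) (hh i) → ∃! j, (i, a, j) ∈ CM) ∧
    (a ∈ outMsgs (S i) (hh i) → ∃! j, (j, a, i) ∈ CM)

/-- Conditions (*) and (**) for a candidate transition relation `d` of the local
connection policy of interface `hh i` (the name `k_i` is represented by `i`). -/
def PolicySat (S : ∀ i, CS (P i) A) (hh : ∀ i, P i) (CM : Set (I × A × I)) (i : I)
    (d : Set ((S i).St (hh i) × Act I A × (S i).St (hh i))) : Prop :=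
  (∀ q r a q', (q, Act.mk r (hh i) Dir.inp a, q') ∈ (S i).delta (hh i) →
      ∃ j, j ≠ i ∧ (i, a, j) ∈ CM ∧ (q, Act.mk i j Dir.out a, q') ∈ d) ∧
  (∀ q r a q', (q, Act.mk (hh i) r Dir.out a, q') ∈ (S i).delta (hh i) →
      ∃ j, j ≠ i ∧ (j, a, i) ∈ CM ∧ (q, Act.mk j i Dir.inp a, q') ∈ d)

/-- `d` belongs to the local connection policy set `IS(M_{h_i}, CM)`:
it is a minimal relation satisfying (*) and (**).  (The states `q̇` of the
policy machine are identified with the states `q` of `M_{h_i}`.) -/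
def InIS (S : ∀ i, CS (P i) A) (hh : ∀ i, P i) (CM : Set (I × A × I)) (i : I)
    (d : Set ((S i).St (hh i) × Act I A × (S i).St (hh i))) : Prop :=
  PolicySat S hh CM i d ∧ ∀ d', d' ⊆ d → PolicySat S hh CM i d' → d' = d

/-- The communicating system (over the participant type `I` of names `k_i`)
determined by the family of transition relations `Kd` of a connection policy. -/
def policyCS (S : ∀ i, CS (P i) A) (hh : ∀ i, P i)
    (Kd : ∀ i, Set ((S i).St (hh i) × Act I A × (S i).St (hh i))) : CS I A where
  St := fun i => (S i).St (hh i)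
  init := fun i => (S i).init (hh i)
  delta := Kd

/-- `Kd` is a connection policy for the interfaces `hh` complying with `CM`. -/
def IsConnPolicy (S : ∀ i, CS (P i) A) (hh : ∀ i, P i) (CM : Set (I × A × I))
    (Kd : ∀ i, Set ((S i).St (hh i) × Act I A × (S i).St (hh i))) : Prop :=
  ∀ i, InIS S hh CM i (Kd i)

/-- States of the gateway for interface `hh i`: the original states plus one
fresh state per transition of `M_{h_i}`. -/
abbrev GWState (S : ∀ i, CS (P i) A) (hh : ∀ i, P i) (i : I) : Type :=
  (S i).St (hh i) ⊕ ((S i).St (hh i) × Act (P i) A × (S i).St (hh i))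

/-- Lifting of a local action of system `i` to the composed participant type. -/
def liftAct (i : I) (l : Act (P i) A) : Act ((j : I) × P j) A :=
  Act.mk ⟨i, l.snd⟩ ⟨i, l.rcv⟩ l.dir l.msg

/-- Transition relation of the gateway `M_{h_i} ⟲ M_{k_i}`. -/
def GWdelta (S : ∀ i, CS (P i) A) (hh : ∀ i, P i)
    (Kd : ∀ i, Set ((S i).St (hh i) × Act I A × (S i).St (hh i))) (i : I) :
    Set (GWState S hh i × Act ((j : I) × P j) A × GWState S hh i) :=
  {x | ∃ q a q',
    (∃ s r, (q, Act.mk (hh i) s Dir.out a, q') ∈ (S i).delta (hh i) ∧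
        (q, Act.mk r i Dir.inp a, q') ∈ Kd i ∧
        (x = (Sum.inl q, Act.mk ⟨r, hh r⟩ ⟨i, hh i⟩ Dir.inp a,
              Sum.inr (q, Act.mk (hh i) s Dir.out a, q')) ∨
         x = (Sum.inr (q, Act.mk (hh i) s Dir.out a, q'),
              Act.mk ⟨i, hh i⟩ ⟨i, s⟩ Dir.out a, Sum.inl q'))) ∨
    (∃ s r, (q, Act.mk s (hh i) Dir.inp a, q') ∈ (S i).delta (hh i) ∧
        (q, Act.mk i r Dir.out a, q') ∈ Kd i ∧
        (x = (Sum.inl q, Act.mk ⟨i, s⟩ ⟨i, hh i⟩ Dir.inp a,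
              Sum.inr (q, Act.mk s (hh i) Dir.inp a, q')) ∨
         x = (Sum.inr (q, Act.mk s (hh i) Dir.inp a, q'),
              Act.mk ⟨i, hh i⟩ ⟨r, hh r⟩ Dir.out a, Sum.inl q')))}

open Classical in
/-- State type of the machine of participant `⟨i, p⟩` in the multicomposition:
the gateway state type if `p` is the interface of system `i`, the original
state type otherwise. -/
noncomputable def MCSt (S : ∀ i, CS (P i) A) (hh : ∀ i, P i) (x : (i : I) × P i) : Type :=
  if x.2 = hh x.1 then GWState S hh x.1 else (S x.1).St x.2

/-- The multicomposition `MC({S_i}, K)`: all machines of the single systems,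
with the machine of each interface `hh i` replaced by its gateway. -/
noncomputable def MC (S : ∀ i, CS (P i) A) (hh : ∀ i, P i)
    (Kd : ∀ i, Set ((S i).St (hh i) × Act I A × (S i).St (hh i))) :
    CS ((i : I) × P i) A where
  St := MCSt S hh
  init := fun x => by
    by_cases hp : x.2 = hh x.1
    · have h : MCSt S hh x = GWState S hh x.1 := by simp [MCSt, hp]
      rw [h]; exact Sum.inl ((S x.1).init (hh x.1))
    · have h : MCSt S hh x = (S x.1).St x.2 := by simp [MCSt, hp]
      rw [h]; exact (S x.1).init x.2
  delta := fun x => by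
    by_cases hp : x.2 = hh x.1
    · have h : MCSt S hh x = GWState S hh x.1 := by simp [MCSt, hp]
      rw [h]; exact GWdelta S hh Kd x.1
    · have h : MCSt S hh x = (S x.1).St x.2 := by simp [MCSt, hp]
      rw [h]
      exact {t | ∃ q l q', (q, l, q') ∈ (S x.1).delta x.2 ∧ t = (q, liftAct x.1 l, q')}

/-- The state of the gateway of interface `hh i` in a configuration of the
multicomposition, as an element of `GWState`. -/
noncomputable def toGW (S : ∀ i, CS (P i) A) (hh : ∀ i, P i) (i : I)
    (x : MCSt S hh ⟨i, hh i⟩) : GWState S hh i :=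
  cast (by simp [MCSt]) x

/-- The state of a non-interface participant in a configuration of the
multicomposition, as an element of its original state type. -/
noncomputable def toLoc (S : ∀ i, CS (P i) A) (hh : ∀ i, P i) {i : I} {p : P i}
    (hp : p ≠ hh i) (x : MCSt S hh ⟨i, p⟩) : (S i).St p :=
  cast (by simp [MCSt, hp]) x

/-- Projection of a configuration of the multicomposition to system `S i`,
assuming the gateway state of `hh i` is not a fresh intermediate state
(i.e. it is of the form `Sum.inl q`). -/
noncomputable def projSys (S : ∀ i, CS (P i) A) (hh : ∀ i, P i)
    (Kd : ∀ i, Set ((S i).St (hh i) × Act I A × (S i).St (hh i)))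
    (i : I) (s : Config (MC S hh Kd))
    (hq : ∃ q, toGW S hh i (s.st ⟨i, hh i⟩) = Sum.inl q) : Config (S i) where
  st := fun p => by
    by_cases hp : p = hh i
    · rw [hp]; exact hq.choose
    · exact toLoc S hh hp (s.st ⟨i, p⟩)
  ch := fun p q => s.ch ⟨i, p⟩ ⟨i, q⟩

/-- Projection of a configuration of the multicomposition to the connection
policy `K`, assuming no gateway is in a fresh intermediate state. -/
noncomputable def projPolicy (S : ∀ i, CS (P i) A) (hh : ∀ i, P i)
    (Kd : ∀ i, Set ((S i).St (hh i) × Act I A × (S i).St (hh i)))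
    (s : Config (MC S hh Kd))
    (hq : ∀ i, ∃ q, toGW S hh i (s.st ⟨i, hh i⟩) = Sum.inl q) :
    Config (policyCS S hh Kd) where
  st := fun i => (hq i).choose
  ch := fun i j => s.ch ⟨i, hh i⟩ ⟨j, hh j⟩

end Composition

end CFSM

namespace CFSM
section AuxProofMC


lemma mem_cast_set3 {α β γ : Type} (e : α = β) (h : Set (α × γ × α) = Set (β × γ × β))
    (s : Set (α × γ × α)) (x y : β) (l : γ) :
    (x, l, y) ∈ cast h s ↔ (cast e.symm x, l, cast e.symm y) ∈ s := by
  subst e; exact Iff.rfl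

variable {I : Type} {P : I → Type} {A : Type}
variable (S : ∀ i, CS (P i) A) (hh : ∀ i, P i)
  (Kd : ∀ i, Set ((S i).St (hh i) × Act I A × (S i).St (hh i)))

lemma toGW_init (i : I) :
    toGW S hh i ((MC S hh Kd).init ⟨i, hh i⟩) = Sum.inl ((S i).init (hh i)) := by
  simp only [MC, toGW, MCSt]; simp
  exact cast_cast _ _ _

lemma toLoc_init (i : I) (p : P i) (hp : p ≠ hh i) :
    toLoc S hh hp ((MC S hh Kd).init ⟨i, p⟩) = (S i).init p := by
  simp only [MC, toLoc, MCSt]; simp [hp]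
  exact cast_cast _ _ _

lemma toGW_surj (i : I) (g : GWState S hh i) : ∃ x, toGW S hh i x = g :=
  ⟨cast (by simp [MCSt]) g, by simp [toGW]⟩

lemma toLoc_surj (i : I) (p : P i) (hp : p ≠ hh i) (g : (S i).St p) :
    ∃ x, toLoc S hh hp x = g :=
  ⟨cast (by simp [MCSt, hp]) g, by simp [toLoc]⟩

lemma delta_gw_iff (i : I) (q q' : (MC S hh Kd).St ⟨i, hh i⟩) (l : Act ((j:I) × P j) A) :
    (q, l, q') ∈ (MC S hh Kd).delta ⟨i, hh i⟩ ↔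
    (toGW S hh i q, l, toGW S hh i q') ∈ GWdelta S hh Kd i := by
  simp only [MC, toGW, MCSt]
  simp only [↓reduceDIte, eq_mpr_eq_cast]
  exact mem_cast_set3 (by simp [MCSt]) _ _ _ _ _

lemma delta_loc_iff (i : I) (p : P i) (hp : p ≠ hh i) (q q' : (MC S hh Kd).St ⟨i, p⟩)
    (l : Act ((j:I) × P j) A) :
    (q, l, q') ∈ (MC S hh Kd).delta ⟨i, p⟩ ↔
    ∃ l0, (toLoc S hh hp q, l0, toLoc S hh hp q') ∈ (S i).delta p ∧ l = liftAct i l0 := by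
  simp only [MC, toLoc, MCSt]
  simp only [hp, ↓reduceDIte, eq_mpr_eq_cast]
  refine (mem_cast_set3 (show (S i).St p = _ by simp [MCSt, hp]) _ _ _ _ _).trans ?_
  constructor
  · rintro ⟨q0, l0, q0', hm, heq⟩
    rw [Prod.ext_iff, Prod.ext_iff] at heq
    obtain ⟨h1, h2, h3⟩ := heq
    subst h1; subst h3; exact ⟨l0, hm, h2⟩
  · rintro ⟨l0, hm, hl⟩
    exact ⟨_, l0, _, hm, by rw [hl]⟩

/-- Base-state of a gateway state from the viewpoint of the original system. -/
def gwS {i : I} : GWState S hh i → (S i).St (hh i)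
  | .inl q => q
  | .inr (q, l, q') => match l.dir with | .out => q | .inp => q'

/-- Base-state of a gateway state from the viewpoint of the connection policy. -/
def gwK {i : I} : GWState S hh i → (S i).St (hh i)
  | .inl q => q
  | .inr (q, l, q') => match l.dir with | .out => q' | .inp => q

/-- The simulation invariant. -/
def MCInv (c : Config (MC S hh Kd)) : Prop :=
  ∃ (σ : ∀ i, Config (S i)) (κ : Config (policyCS S hh Kd)),
    (∀ i, σ i ∈ RC (S i)) ∧ κ ∈ RC (policyCS S hh Kd) ∧
    (∀ i (p : P i) (hp : p ≠ hh i), (σ i).st p = toLoc S hh hp (c.st ⟨i, p⟩)) ∧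
    (∀ i, (σ i).st (hh i) = gwS S hh (toGW S hh i (c.st ⟨i, hh i⟩))) ∧
    (∀ i, κ.st i = gwK S hh (toGW S hh i (c.st ⟨i, hh i⟩))) ∧
    (∀ i (p q : P i), (σ i).ch p q = c.ch ⟨i, p⟩ ⟨i, q⟩) ∧
    (∀ i j, κ.ch i j = c.ch ⟨i, hh i⟩ ⟨j, hh j⟩)

lemma MCInv_init : MCInv S hh Kd (MC S hh Kd).initConfig := by
  refine ⟨fun i => (S i).initConfig, (policyCS S hh Kd).initConfig,
    fun i => Relation.ReflTransGen.refl, Relation.ReflTransGen.refl, ?_, ?_, ?_, ?_, ?_⟩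
  · intro i p hp; exact (toLoc_init S hh Kd i p hp).symm
  · intro i; rw [show (MC S hh Kd).initConfig.st ⟨i, hh i⟩ = (MC S hh Kd).init ⟨i, hh i⟩ from rfl,
      toGW_init]; rfl
  · intro i; rw [show (MC S hh Kd).initConfig.st ⟨i, hh i⟩ = (MC S hh Kd).init ⟨i, hh i⟩ from rfl,
      toGW_init]; rfl
  · intro i p q; rfl
  · intro i j; rfl


lemma sfst {i j : I} {u : P i} {v : P j} (h : (⟨i,u⟩ : (k : I) × P k) = ⟨j,v⟩) : i = j := by
  cases h; rfl

lemma ssnd {i : I} {u v : P i} (h : (⟨i,u⟩ : (k : I) × P k) = ⟨i,v⟩) : u = v := by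
  cases h; rfl

lemma pne_fst {α β : Type} {x y : α} {u v : β} (h : x ≠ y) : (x,u) ≠ (y,v) := by
  intro hE; exact h (congrArg Prod.fst hE)

lemma pne_snd {α β : Type} {x y : α} {u v : β} (h : u ≠ v) : (x,u) ≠ (y,v) := by
  intro hE; exact h (congrArg Prod.snd hE)

lemma MCInv_step (hwf : ∀ i, (S i).WellFormed)
    (hKout : ∀ i q r a q', (q, Act.mk i r Dir.out a, q') ∈ Kd i → r ≠ i)
    (hKinp : ∀ i q r a q', (q, Act.mk r i Dir.inp a, q') ∈ Kd i → r ≠ i)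
    {b c : Config (MC S hh Kd)} (hInv : MCInv S hh Kd b) (hst : Step (MC S hh Kd) b c) :
    MCInv S hh Kd c := by
  classical
  obtain ⟨σ, κ, hRC, hKRC, hloc, hgwS, hgwK, hchS, hchK⟩ := hInv
  obtain ⟨l, hstep⟩ := hst
  obtain ⟨sx, rx, d, a⟩ := l
  cases d
  case out =>
    obtain ⟨hmem, hstate, hch1, hch2⟩ := hstep
    obtain ⟨i, p⟩ := sx
    by_cases hp : p = hh i
    · -- gateway output
      subst hp
      rw [delta_gw_iff S hh Kd i] at hmem
      obtain ⟨q, a0, q', hcase⟩ := hmem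
      rcases hcase with ⟨s, r, hod, hkd, hx | hx⟩ | ⟨s, r, hod, hkd, hx | hx⟩
      · exact Dir.noConfusion (congrArg (fun z => (z.2.1 : Act ((k:I) × P k) A).dir) hx)
      · -- second half of an output-forwarding: a step of S i
        have h1 := congrArg Prod.fst hx
        have h2 := congrArg (fun z => z.2.1) hx
        have h3 := congrArg (fun z => z.2.2) hx
        simp only at h1 h2 h3
        simp only [Act.mk.injEq, true_and] at h2
        obtain ⟨hrx, ha⟩ := h2
        subst hrx
        rw [← ha] at hod hkd h1
        clear ha hx
        have hs : s ≠ hh i := fun hE => (hwf i _ _ hod).2 (by rw [hE])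
        set σi' : Config (S i) :=
          ⟨Function.update (σ i).st (hh i) q', fun u v => c.ch ⟨i,u⟩ ⟨i,v⟩⟩ with hσi'
        have hstepS : StepL (S i) (σ i) (Act.mk (hh i) s Dir.out a) σi' := by
          refine ⟨?_, ?_, ?_, ?_⟩
          · show ((σ i).st (hh i), _, Function.update (σ i).st (hh i) q' (hh i)) ∈ _
            rw [Function.update_self, hgwS i, h1]
            exact hod
          · intro u hu; exact Function.update_of_ne hu _ _
          · show c.ch ⟨i,hh i⟩ ⟨i,s⟩ = (σ i).ch (hh i) s ++ [a]
            rw [hchS i (hh i) s]; exact hch1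
          · intro u v huv
            show c.ch ⟨i,u⟩ ⟨i,v⟩ = (σ i).ch u v
            rw [hchS i u v]
            refine hch2 _ _ (fun hE => huv ?_)
            rw [Prod.ext_iff] at hE ⊢
            exact ⟨ssnd hE.1, ssnd hE.2⟩
        refine ⟨Function.update σ i σi', κ, ?_, hKRC, ?_, ?_, ?_, ?_, ?_⟩
        · intro j
          by_cases hj : j = i
          · subst hj; rw [Function.update_self]
            exact (hRC j).tail ⟨_, hstepS⟩
          · rw [Function.update_of_ne hj]; exact hRC j
        · intro j u hu
          by_cases hj : j = i
          · subst hj; rw [Function.update_self]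
            show Function.update (σ j).st (hh j) q' u = _
            rw [Function.update_of_ne hu, hloc j u hu,
              hstate _ (fun hE => hu (ssnd hE))]
          · rw [Function.update_of_ne hj, hloc j u hu,
              hstate _ (fun hE => hj (sfst hE))]
        · intro j
          by_cases hj : j = i
          · subst hj; rw [Function.update_self, h3]
            show Function.update (σ j).st (hh j) q' (hh j) = q'
            exact Function.update_self _ _ _
          · rw [Function.update_of_ne hj, hstate _ (fun hE => hj (sfst hE))]
            exact hgwS j
        · intro j
          by_cases hj : j = i
          · subst hj; rw [h3, hgwK j, h1]; rfl
          · rw [hstate _ (fun hE => hj (sfst hE))]; exact hgwK j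
        · intro j u v
          by_cases hj : j = i
          · subst hj; rw [Function.update_self]
          · rw [Function.update_of_ne hj, hchS j u v]
            exact (hch2 _ _ (pne_fst (fun hE => hj (sfst hE)))).symm
        · intro j j'
          rw [hchK j j']
          refine (hch2 _ _ (pne_snd (fun hE => hs ?_))).symm
          have hj' := sfst hE; subst hj'
          exact (ssnd hE).symm
      · exact Dir.noConfusion (congrArg (fun z => (z.2.1 : Act ((k:I) × P k) A).dir) hx)
      · -- second half of an input-forwarding: a step of the policy
        have h1 := congrArg Prod.fst hx
        have h2 := congrArg (fun z => z.2.1) hx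
        have h3 := congrArg (fun z => z.2.2) hx
        simp only at h1 h2 h3
        simp only [Act.mk.injEq, true_and] at h2
        obtain ⟨hrx, ha⟩ := h2
        subst hrx
        rw [← ha] at hod hkd h1
        clear ha hx
        have hr : r ≠ i := hKout i _ _ _ _ hkd
        set κ' : Config (policyCS S hh Kd) :=
          ⟨Function.update κ.st i q', fun u v => c.ch ⟨u, hh u⟩ ⟨v, hh v⟩⟩ with hκ'
        have hstepK : StepL (policyCS S hh Kd) κ (Act.mk i r Dir.out a) κ' := by
          refine ⟨?_, ?_, ?_, ?_⟩
          · show (κ.st i, _, Function.update κ.st i q' i) ∈ Kd i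
            erw [Function.update_self, hgwK i, h1]
            exact hkd
          · intro u hu; exact Function.update_of_ne hu _ _
          · show c.ch ⟨i,hh i⟩ ⟨r,hh r⟩ = κ.ch i r ++ [a]
            rw [hchK i r]; exact hch1
          · intro u v huv
            show c.ch ⟨u, hh u⟩ ⟨v, hh v⟩ = κ.ch u v
            rw [hchK u v]
            refine hch2 _ _ (fun hE => huv ?_)
            rw [Prod.ext_iff] at hE ⊢
            exact ⟨sfst hE.1, sfst hE.2⟩
        refine ⟨σ, κ', ?_, hKRC.tail ⟨_, hstepK⟩, ?_, ?_, ?_, ?_, ?_⟩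
        · exact hRC
        · intro j u hu
          by_cases hj : j = i
          · subst hj
            rw [hloc j u hu, hstate _ (fun hE => hu (ssnd hE))]
          · rw [hloc j u hu, hstate _ (fun hE => hj (sfst hE))]
        · intro j
          by_cases hj : j = i
          · subst hj; rw [h3, hgwS j, h1]; rfl
          · rw [hstate _ (fun hE => hj (sfst hE))]; exact hgwS j
        · intro j
          by_cases hj : j = i
          · subst hj
            show Function.update κ.st j q' j = _
            erw [Function.update_self, h3]; rfl
          · show Function.update κ.st i q' j = _
            erw [Function.update_of_ne hj, hstate _ (fun hE => hj (sfst hE))]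
            exact hgwK j
        · intro j u v
          rw [hchS j u v]
          refine (hch2 _ _ ?_).symm
          intro hE
          rw [Prod.ext_iff] at hE
          exact hr ((sfst hE.2).symm.trans (sfst hE.1))
        · intro j j'; rfl
    · -- non-interface output
      rw [delta_loc_iff S hh Kd i p hp] at hmem
      obtain ⟨⟨s0, r0, d0, a0⟩, hm0, hl0⟩ := hmem
      simp only [liftAct, Act.mk.injEq] at hl0
      obtain ⟨he1, he2, he3, he4⟩ := hl0
      have hs0 : s0 = p := by
        have := (hwf i p _ hm0).1
        simp only [Act.subject, ← he3] at this
        exact this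
      subst hs0; subst he2; subst he3; subst he4
      set σi' : Config (S i) :=
        ⟨Function.update (σ i).st s0 (toLoc S hh hp (c.st ⟨i,s0⟩)),
         fun u v => c.ch ⟨i,u⟩ ⟨i,v⟩⟩ with hσi'
      have hne_sr : ∀ u : P i, u ≠ s0 → (⟨i,u⟩ : (k : I) × P k) ≠ ⟨i,s0⟩ :=
        fun u hu hE => hu (ssnd hE)
      have hstepS : StepL (S i) (σ i) (Act.mk s0 r0 Dir.out a) σi' := by
        refine ⟨?_, ?_, ?_, ?_⟩
        · show ((σ i).st s0, _, Function.update (σ i).st s0 _ s0) ∈ _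
          rw [Function.update_self, hloc i s0 hp]
          exact hm0
        · intro u hu; exact Function.update_of_ne hu _ _
        · show c.ch ⟨i,s0⟩ ⟨i,r0⟩ = (σ i).ch s0 r0 ++ [a]
          rw [hchS i s0 r0]; exact hch1
        · intro u v huv
          show c.ch ⟨i,u⟩ ⟨i,v⟩ = (σ i).ch u v
          rw [hchS i u v]
          refine hch2 _ _ (fun hE => huv ?_)
          rw [Prod.ext_iff] at hE ⊢
          exact ⟨ssnd hE.1, ssnd hE.2⟩
      refine ⟨Function.update σ i σi', κ, ?_, hKRC, ?_, ?_, ?_, ?_, ?_⟩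
      · intro j
        by_cases hj : j = i
        · subst hj; rw [Function.update_self]
          exact (hRC j).tail ⟨_, hstepS⟩
        · rw [Function.update_of_ne hj]; exact hRC j
      · intro j u hu
        by_cases hj : j = i
        · subst hj; rw [Function.update_self]
          by_cases hup : u = s0
          · subst hup
            show Function.update (σ j).st u _ u = _
            exact Function.update_self _ _ _
          · show Function.update (σ j).st s0 _ u = _
            rw [Function.update_of_ne hup, hloc j u hu, hstate _ (hne_sr u hup)]
        · rw [Function.update_of_ne hj, hloc j u hu,
            hstate _ (fun hE => hj (sfst hE))]
      · intro j
        by_cases hj : j = i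
        · subst hj; rw [Function.update_self]
          show Function.update (σ j).st s0 _ (hh j) = _
          rw [Function.update_of_ne (Ne.symm hp),
            hstate _ (hne_sr _ (Ne.symm hp)), hgwS j]
        · rw [Function.update_of_ne hj, hstate _ (fun hE => hj (sfst hE))]
          exact hgwS j
      · intro j
        by_cases hj : j = i
        · subst hj
          rw [hstate _ (hne_sr _ (Ne.symm hp))]; exact hgwK j
        · rw [hstate _ (fun hE => hj (sfst hE))]; exact hgwK j
      · intro j u v
        by_cases hj : j = i
        · subst hj; rw [Function.update_self]
        · rw [Function.update_of_ne hj, hchS j u v]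
          exact (hch2 _ _ (pne_fst (fun hE => hj (sfst hE)))).symm
      · intro j j'
        rw [hchK j j']
        refine (hch2 _ _ ?_).symm
        refine pne_fst (fun hE => hp ?_)
        have h1 := sfst hE; subst h1
        exact (ssnd hE).symm
  case inp =>
    obtain ⟨hmem, hstate, hch1, hch2⟩ := hstep
    obtain ⟨i, p⟩ := rx
    by_cases hp : p = hh i
    · -- gateway input (first half of a forwarding)
      subst hp
      rw [delta_gw_iff S hh Kd i] at hmem
      obtain ⟨q, a0, q', hcase⟩ := hmem
      rcases hcase with ⟨s, r, hod, hkd, hx | hx⟩ | ⟨s, r, hod, hkd, hx | hx⟩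
      · -- first half of output-forwarding: policy input step
        have h1 := congrArg Prod.fst hx
        have h2 := congrArg (fun z => z.2.1) hx
        have h3 := congrArg (fun z => z.2.2) hx
        simp only at h1 h2 h3
        simp only [Act.mk.injEq, true_and, and_true] at h2
        obtain ⟨hsx, ha⟩ := h2
        subst hsx
        rw [← ha] at hod hkd h3
        clear ha hx
        have hr : r ≠ i := hKinp i _ _ _ _ hkd
        set κ' : Config (policyCS S hh Kd) :=
          ⟨Function.update κ.st i q', fun u v => c.ch ⟨u, hh u⟩ ⟨v, hh v⟩⟩ with hκ'
        have hstepK : StepL (policyCS S hh Kd) κ (Act.mk r i Dir.inp a) κ' := by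
          refine ⟨?_, ?_, ?_, ?_⟩
          · show (κ.st i, _, Function.update κ.st i q' i) ∈ Kd i
            erw [Function.update_self, hgwK i, h1]
            exact hkd
          · intro u hu; exact Function.update_of_ne hu _ _
          · show κ.ch r i = a :: c.ch ⟨r, hh r⟩ ⟨i, hh i⟩
            rw [hchK r i]; exact hch1
          · intro u v huv
            show c.ch ⟨u, hh u⟩ ⟨v, hh v⟩ = κ.ch u v
            rw [hchK u v]
            refine hch2 _ _ (fun hE => huv ?_)
            rw [Prod.ext_iff] at hE ⊢
            exact ⟨sfst hE.1, sfst hE.2⟩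
        refine ⟨σ, κ', hRC, hKRC.tail ⟨_, hstepK⟩, ?_, ?_, ?_, ?_, ?_⟩
        · intro j u hu
          by_cases hj : j = i
          · subst hj
            rw [hloc j u hu, hstate _ (fun hE => hu (ssnd hE))]
          · rw [hloc j u hu, hstate _ (fun hE => hj (sfst hE))]
        · intro j
          by_cases hj : j = i
          · subst hj; rw [h3, hgwS j, h1]; rfl
          · rw [hstate _ (fun hE => hj (sfst hE))]; exact hgwS j
        · intro j
          by_cases hj : j = i
          · subst hj
            show Function.update κ.st j q' j = _
            erw [Function.update_self, h3]; rfl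
          · show Function.update κ.st i q' j = _
            erw [Function.update_of_ne hj, hstate _ (fun hE => hj (sfst hE))]
            exact hgwK j
        · intro j u v
          rw [hchS j u v]
          refine (hch2 _ _ ?_).symm
          intro hE
          rw [Prod.ext_iff] at hE
          exact hr ((sfst hE.1).symm.trans (sfst hE.2))
        · intro j j'; rfl
      · exact Dir.noConfusion (congrArg (fun z => (z.2.1 : Act ((k:I) × P k) A).dir) hx)
      · -- first half of input-forwarding: input step of S i
        have h1 := congrArg Prod.fst hx
        have h2 := congrArg (fun z => z.2.1) hx
        have h3 := congrArg (fun z => z.2.2) hx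
        simp only at h1 h2 h3
        simp only [Act.mk.injEq, true_and, and_true] at h2
        obtain ⟨hsx, ha⟩ := h2
        subst hsx
        rw [← ha] at hod hkd h3
        clear ha hx
        have hs : s ≠ hh i := fun hE => (hwf i _ _ hod).2 (by rw [hE])
        set σi' : Config (S i) :=
          ⟨Function.update (σ i).st (hh i) q', fun u v => c.ch ⟨i,u⟩ ⟨i,v⟩⟩ with hσi'
        have hstepS : StepL (S i) (σ i) (Act.mk s (hh i) Dir.inp a) σi' := by
          refine ⟨?_, ?_, ?_, ?_⟩
          · show ((σ i).st (hh i), _, Function.update (σ i).st (hh i) q' (hh i)) ∈ _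
            rw [Function.update_self, hgwS i, h1]
            exact hod
          · intro u hu; exact Function.update_of_ne hu _ _
          · show (σ i).ch s (hh i) = a :: c.ch ⟨i,s⟩ ⟨i,hh i⟩
            rw [hchS i s (hh i)]; exact hch1
          · intro u v huv
            show c.ch ⟨i,u⟩ ⟨i,v⟩ = (σ i).ch u v
            rw [hchS i u v]
            refine hch2 _ _ (fun hE => huv ?_)
            rw [Prod.ext_iff] at hE ⊢
            exact ⟨ssnd hE.1, ssnd hE.2⟩
        refine ⟨Function.update σ i σi', κ, ?_, hKRC, ?_, ?_, ?_, ?_, ?_⟩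
        · intro j
          by_cases hj : j = i
          · subst hj; rw [Function.update_self]
            exact (hRC j).tail ⟨_, hstepS⟩
          · rw [Function.update_of_ne hj]; exact hRC j
        · intro j u hu
          by_cases hj : j = i
          · subst hj; rw [Function.update_self]
            show Function.update (σ j).st (hh j) q' u = _
            rw [Function.update_of_ne hu, hloc j u hu,
              hstate _ (fun hE => hu (ssnd hE))]
          · rw [Function.update_of_ne hj, hloc j u hu,
              hstate _ (fun hE => hj (sfst hE))]
        · intro j
          by_cases hj : j = i
          · subst hj; rw [Function.update_self, h3]
            show Function.update (σ j).st (hh j) q' (hh j) = q'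
            exact Function.update_self _ _ _
          · rw [Function.update_of_ne hj, hstate _ (fun hE => hj (sfst hE))]
            exact hgwS j
        · intro j
          by_cases hj : j = i
          · subst hj; rw [h3, hgwK j, h1]; rfl
          · rw [hstate _ (fun hE => hj (sfst hE))]; exact hgwK j
        · intro j u v
          by_cases hj : j = i
          · subst hj; rw [Function.update_self]
          · rw [Function.update_of_ne hj, hchS j u v]
            exact (hch2 _ _ (pne_fst (fun hE => hj (sfst hE)))).symm
        · intro j j'
          rw [hchK j j']
          refine (hch2 _ _ (pne_fst (fun hE => hs ?_))).symm
          have hj' := sfst hE; subst hj'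
          exact (ssnd hE).symm
      · exact Dir.noConfusion (congrArg (fun z => (z.2.1 : Act ((k:I) × P k) A).dir) hx)
    · -- non-interface input
      rw [delta_loc_iff S hh Kd i p hp] at hmem
      obtain ⟨⟨s0, r0, d0, a0⟩, hm0, hl0⟩ := hmem
      simp only [liftAct, Act.mk.injEq] at hl0
      obtain ⟨he1, he2, he3, he4⟩ := hl0
      have hr0 : r0 = p := by
        have := (hwf i p _ hm0).1
        simp only [Act.subject, ← he3] at this
        exact this
      subst hr0; rw [← he3, ← he4] at hm0; subst he1
      clear he3 he4
      set σi' : Config (S i) :=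
        ⟨Function.update (σ i).st r0 (toLoc S hh hp (c.st ⟨i,r0⟩)),
         fun u v => c.ch ⟨i,u⟩ ⟨i,v⟩⟩ with hσi'
      have hne_sr : ∀ u : P i, u ≠ r0 → (⟨i,u⟩ : (k : I) × P k) ≠ ⟨i,r0⟩ :=
        fun u hu hE => hu (ssnd hE)
      have hstepS : StepL (S i) (σ i) (Act.mk s0 r0 Dir.inp a) σi' := by
        refine ⟨?_, ?_, ?_, ?_⟩
        · show ((σ i).st r0, _, Function.update (σ i).st r0 _ r0) ∈ _
          rw [Function.update_self, hloc i r0 hp]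
          exact hm0
        · intro u hu; exact Function.update_of_ne hu _ _
        · show (σ i).ch s0 r0 = a :: c.ch ⟨i,s0⟩ ⟨i,r0⟩
          rw [hchS i s0 r0]; exact hch1
        · intro u v huv
          show c.ch ⟨i,u⟩ ⟨i,v⟩ = (σ i).ch u v
          rw [hchS i u v]
          refine hch2 _ _ (fun hE => huv ?_)
          rw [Prod.ext_iff] at hE ⊢
          exact ⟨ssnd hE.1, ssnd hE.2⟩
      refine ⟨Function.update σ i σi', κ, ?_, hKRC, ?_, ?_, ?_, ?_, ?_⟩
      · intro j
        by_cases hj : j = i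
        · subst hj; rw [Function.update_self]
          exact (hRC j).tail ⟨_, hstepS⟩
        · rw [Function.update_of_ne hj]; exact hRC j
      · intro j u hu
        by_cases hj : j = i
        · subst hj; rw [Function.update_self]
          by_cases hup : u = r0
          · subst hup
            show Function.update (σ j).st u _ u = _
            exact Function.update_self _ _ _
          · show Function.update (σ j).st r0 _ u = _
            rw [Function.update_of_ne hup, hloc j u hu, hstate _ (hne_sr u hup)]
        · rw [Function.update_of_ne hj, hloc j u hu,
            hstate _ (fun hE => hj (sfst hE))]
      · intro j
        by_cases hj : j = i
        · subst hj; rw [Function.update_self]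
          show Function.update (σ j).st r0 _ (hh j) = _
          rw [Function.update_of_ne (Ne.symm hp),
            hstate _ (hne_sr _ (Ne.symm hp)), hgwS j]
        · rw [Function.update_of_ne hj, hstate _ (fun hE => hj (sfst hE))]
          exact hgwS j
      · intro j
        by_cases hj : j = i
        · subst hj
          rw [hstate _ (hne_sr _ (Ne.symm hp))]; exact hgwK j
        · rw [hstate _ (fun hE => hj (sfst hE))]; exact hgwK j
      · intro j u v
        by_cases hj : j = i
        · subst hj; rw [Function.update_self]
        · rw [Function.update_of_ne hj, hchS j u v]
          exact (hch2 _ _ (pne_fst (fun hE => hj (sfst hE)))).symm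
      · intro j j'
        rw [hchK j j']
        refine (hch2 _ _ (pne_snd (fun hE => hp ?_))).symm
        have h1 := sfst hE; subst h1
        exact (ssnd hE).symm


lemma Kd_just (CM : Set (I × A × I)) (hK : IsConnPolicy S hh CM Kd) (i : I)
    (x : (S i).St (hh i) × Act I A × (S i).St (hh i)) (hx : x ∈ Kd i) :
    (∃ q j a q' s, x = (q, Act.mk i j Dir.out a, q') ∧ j ≠ i ∧
        (q, Act.mk s (hh i) Dir.inp a, q') ∈ (S i).delta (hh i)) ∨
    (∃ q j a q' s, x = (q, Act.mk j i Dir.inp a, q') ∧ j ≠ i ∧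
        (q, Act.mk (hh i) s Dir.out a, q') ∈ (S i).delta (hh i)) := by
  classical
  set Good : Set ((S i).St (hh i) × Act I A × (S i).St (hh i)) :=
    {y | y ∈ Kd i ∧
      ((∃ q j a q' s, y = (q, Act.mk i j Dir.out a, q') ∧ j ≠ i ∧
          (q, Act.mk s (hh i) Dir.inp a, q') ∈ (S i).delta (hh i)) ∨
       (∃ q j a q' s, y = (q, Act.mk j i Dir.inp a, q') ∧ j ≠ i ∧
          (q, Act.mk (hh i) s Dir.out a, q') ∈ (S i).delta (hh i)))} with hG
  have hsub : Good ⊆ Kd i := fun y hy => hy.1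
  have hsat : PolicySat S hh CM i Good := by
    constructor
    · intro q r a q' hq
      obtain ⟨j, hj, hcm, hmem⟩ := (hK i).1.1 q r a q' hq
      exact ⟨j, hj, hcm, hmem, Or.inl ⟨q, j, a, q', r, rfl, hj, hq⟩⟩
    · intro q r a q' hq
      obtain ⟨j, hj, hcm, hmem⟩ := (hK i).1.2 q r a q' hq
      exact ⟨j, hj, hcm, hmem, Or.inr ⟨q, j, a, q', r, rfl, hj, hq⟩⟩
  have hGK := (hK i).2 Good hsub hsat
  rw [← hGK] at hx
  exact hx.2

lemma hKout_of (CM : Set (I × A × I)) (hK : IsConnPolicy S hh CM Kd) :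
    ∀ i q r a q', (q, Act.mk i r Dir.out a, q') ∈ Kd i → r ≠ i := by
  intro i q r a q' h
  rcases Kd_just S hh Kd CM hK i _ h with ⟨q0,j,a0,q0',s0,hx,hj,_⟩|⟨q0,j,a0,q0',s0,hx,hj,_⟩
  · have hr := congrArg (fun z => (z.2.1 : Act I A).rcv) hx
    simp only at hr
    rw [hr]; exact hj
  · exact Dir.noConfusion (congrArg (fun z => (z.2.1 : Act I A).dir) hx)

lemma hKinp_of (CM : Set (I × A × I)) (hK : IsConnPolicy S hh CM Kd) :
    ∀ i q r a q', (q, Act.mk r i Dir.inp a, q') ∈ Kd i → r ≠ i := by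
  intro i q r a q' h
  rcases Kd_just S hh Kd CM hK i _ h with ⟨q0,j,a0,q0',s0,hx,hj,_⟩|⟨q0,j,a0,q0',s0,hx,hj,_⟩
  · exact Dir.noConfusion (congrArg (fun z => (z.2.1 : Act I A).dir) hx)
  · have hr := congrArg (fun z => (z.2.1 : Act I A).snd) hx
    simp only at hr
    rw [hr]; exact hj

lemma MCInv_rc (hwf : ∀ i, (S i).WellFormed) (CM : Set (I × A × I))
    (hK : IsConnPolicy S hh CM Kd) :
    ∀ c ∈ RC (MC S hh Kd), MCInv S hh Kd c := by
  intro c hc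
  induction hc with
  | refl => exact MCInv_init S hh Kd
  | tail hr hs ih =>
      exact MCInv_step S hh Kd hwf (hKout_of S hh Kd CM hK) (hKinp_of S hh Kd CM hK) ih hs

end AuxProofMC
end CFSM

open CFSM in
/-- PaI multicomposition preserves reception-error-freeness, provided the
interfaces have no mixed states and the connection policy is reception-error free. -/
theorem receptionErrorFree_preserved_by_multicomposition
    {I : Type} [Finite I] {P : I → Type} [∀ i, Finite (P i)] {A : Type} [Finite A]
    (S : ∀ i, CS (P i) A)
    (hfin : ∀ i p, Finite ((S i).St p))
    (hwf : ∀ i, (S i).WellFormed)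
    (hh : ∀ i, P i)
    (hnomix : ∀ i, NoMixed ((S i).delta (hh i)))
    (CM : Set (I × A × I)) (hCM : IsConnModel S hh CM)
    (Kd : ∀ i, Set ((S i).St (hh i) × Act I A × (S i).St (hh i)))
    (hK : IsConnPolicy S hh CM Kd)
    (hS : ∀ i, ReceptionErrorFree (S i))
    (hKfree : ReceptionErrorFree (policyCS S hh Kd)) :
    ReceptionErrorFree (MC S hh Kd) := by
  intro c hc hur
  obtain ⟨σ, κ, hRC, hKRC, hloc, hgwS, hgwK, hchS, hchK⟩ := MCInv_rc S hh Kd hwf CM hK c hc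
  obtain ⟨⟨i, p⟩, hrecv, hblk⟩ := hur
  by_cases hp : p = hh i
  · subst hp
    -- the gateway of interface i is blocked
    rcases hgw : toGW S hh i (c.st ⟨i, hh i⟩) with q | t
    · -- gateway in a base state q
      by_cases hout : ∃ l0 q0', (q, l0, q0') ∈ (S i).delta (hh i) ∧ l0.dir = Dir.out
      · -- all transitions of M_{h i} at q are outputs: the policy has an unspecified reception
        have hallout : ∀ l0 q0', (q, l0, q0') ∈ (S i).delta (hh i) → l0.dir = Dir.out := by
          intro l0 q0' h
          cases hd : l0.dir
          · rfl
          · exact absurd ⟨hout, ⟨l0, q0', h, hd⟩⟩ (hnomix i q)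
        have hq : κ.st i = q := by rw [hgwK i, hgw]; rfl
        apply hKfree κ hKRC
        refine ⟨i, ⟨?_, ?_⟩, ?_⟩
        · obtain ⟨⟨ls0, lr0, ld0, lm0⟩, q0', hD, hdo⟩ := hout
          have hsub : ls0 = hh i := by
            have := (hwf i _ _ hD).1
            simp only [Act.subject, hdo] at this ⊢
            cases ld0
            · exact this
            · exact Dir.noConfusion hdo
          subst hsub
          cases ld0
          · obtain ⟨j, hj, hcm, hkd⟩ := (hK i).1.2 q lr0 lm0 q0' hD
            exact ⟨Act.mk j i Dir.inp lm0, q0', by rw [hq]; exact hkd⟩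
          · exact Dir.noConfusion hdo
        · intro l0 q2 hmem2
          rw [hq] at hmem2
          rcases Kd_just S hh Kd CM hK i _ hmem2 with
            ⟨q0, j, a0, q0', s0, hxeq, hj, horig⟩ | ⟨q0, j, a0, q0', s0, hxeq, hj, horig⟩
          · -- would be justified by an input of M_{h i} at q: impossible
            have h1 := congrArg Prod.fst hxeq
            simp only at h1
            rw [← h1] at horig
            exact Dir.noConfusion (hallout _ _ horig)
          · have hd := congrArg (fun z => (z.2.1 : Act I A).dir) hxeq
            simp only at hd
            rw [hd]
        · intro s a0 q2 hmem2
          rw [hq] at hmem2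
          rcases Kd_just S hh Kd CM hK i _ hmem2 with
            ⟨q0, j, a0', q0', s0, hxeq, hj, horig⟩ | ⟨q0, j, a0', q0', s0, hxeq, hj, horig⟩
          · exact Dir.noConfusion (congrArg (fun z => (z.2.1 : Act I A).dir) hxeq)
          · have h1 := congrArg Prod.fst hxeq
            have h2 := congrArg (fun z => (z.2.1 : Act I A).msg) hxeq
            have h3 := congrArg (fun z => z.2.2) hxeq
            simp only at h1 h2 h3
            rw [← h1, ← h2, ← h3] at horig
            obtain ⟨X, hX⟩ := toGW_surj S hh i (Sum.inr (q, Act.mk (hh i) s0 Dir.out a0, q2))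
            have hgwmem : (c.st ⟨i, hh i⟩, Act.mk ⟨s, hh s⟩ ⟨i, hh i⟩ Dir.inp a0, X) ∈
                (MC S hh Kd).delta ⟨i, hh i⟩ := by
              refine (delta_gw_iff S hh Kd i _ X _).mpr ?_; rw [hgw, hX]
              exact ⟨q, a0, q2, Or.inl ⟨s0, s, horig, hmem2, Or.inl rfl⟩⟩
            have hb := hblk ⟨s, hh s⟩ a0 X hgwmem
            rw [hchK s i]
            exact hb
      · -- all transitions of M_{h i} at q are inputs: S i has an unspecified reception
        have hallinp : ∀ l0 q0', (q, l0, q0') ∈ (S i).delta (hh i) → l0.dir = Dir.inp := by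
          intro l0 q0' h
          cases hd : l0.dir
          · exact absurd ⟨l0, q0', h, hd⟩ hout
          · rfl
        have hq : (σ i).st (hh i) = q := by rw [hgwS i, hgw]; rfl
        apply hS i (σ i) (hRC i)
        refine ⟨hh i, ⟨?_, ?_⟩, ?_⟩
        · -- q is not final
          obtain ⟨⟨l, X, hl⟩, hall⟩ := hrecv
          rw [delta_gw_iff] at hl
          obtain ⟨q0, a0, q0', hcase⟩ := hl
          rcases hcase with ⟨s, r, hod, hkd, hx | hx⟩ | ⟨s, r, hod, hkd, hx | hx⟩ <;>
            [skip; skip; skip; skip]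
          · have h1 := congrArg Prod.fst hx
            simp only [hgw] at h1
            rw [Sum.inl.injEq] at h1
            rw [← h1] at hod
            exact ⟨_, _, by rw [hq]; exact hod⟩
          · have h1 := congrArg Prod.fst hx
            simp only at h1
            rw [hgw] at h1
            cases h1
          · have h1 := congrArg Prod.fst hx
            simp only [hgw] at h1
            rw [Sum.inl.injEq] at h1
            rw [← h1] at hod
            exact ⟨_, _, by rw [hq]; exact hod⟩
          · have h1 := congrArg Prod.fst hx
            simp only at h1
            rw [hgw] at h1
            cases h1
        · intro l0 q0' h
          rw [hq] at h
          exact hallinp _ _ h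
        · intro s a0 q2 hmem2
          rw [hq] at hmem2
          obtain ⟨j, hj, hcm, hkd⟩ := (hK i).1.1 q s a0 q2 hmem2
          obtain ⟨X, hX⟩ := toGW_surj S hh i (Sum.inr (q, Act.mk s (hh i) Dir.inp a0, q2))
          have hgwmem : (c.st ⟨i, hh i⟩, Act.mk ⟨i, s⟩ ⟨i, hh i⟩ Dir.inp a0, X) ∈
              (MC S hh Kd).delta ⟨i, hh i⟩ := by
            refine (delta_gw_iff S hh Kd i _ X _).mpr ?_; rw [hgw, hX]
            exact ⟨q, a0, q2, Or.inr ⟨s, j, hmem2, hkd, Or.inl rfl⟩⟩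
          have hb := hblk ⟨i, s⟩ a0 X hgwmem
          rw [hchS i s (hh i)]
          exact hb
    · -- gateway in a fresh intermediate state: it has an outgoing output transition only
      obtain ⟨⟨l, X, hl⟩, hall⟩ := hrecv
      have hd := hall l X hl
      rw [delta_gw_iff] at hl
      obtain ⟨q0, a0, q0', hcase⟩ := hl
      rcases hcase with ⟨s, r, hod, hkd, hx | hx⟩ | ⟨s, r, hod, hkd, hx | hx⟩
      · have h1 := congrArg Prod.fst hx
        simp only at h1
        rw [hgw] at h1
        cases h1
      · have h2 := congrArg (fun z => (z.2.1 : Act ((k:I) × P k) A).dir) hx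
        simp only at h2
        rw [hd] at h2
        exact Dir.noConfusion h2
      · have h1 := congrArg Prod.fst hx
        simp only at h1
        rw [hgw] at h1
        cases h1
      · have h2 := congrArg (fun z => (z.2.1 : Act ((k:I) × P k) A).dir) hx
        simp only at h2
        rw [hd] at h2
        exact Dir.noConfusion h2
  · -- non-interface participant p of system i
    apply hS i (σ i) (hRC i)
    have hlocp : (σ i).st p = toLoc S hh hp (c.st ⟨i, p⟩) := hloc i p hp
    refine ⟨p, ⟨?_, ?_⟩, ?_⟩
    · obtain ⟨⟨l, X, hl⟩, hall⟩ := hrecv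
      rw [delta_loc_iff S hh Kd i p hp] at hl
      obtain ⟨l0, hm0, hleq⟩ := hl
      exact ⟨l0, toLoc S hh hp X, by rw [hlocp]; exact hm0⟩
    · intro l0 q0' h
      rw [hlocp] at h
      obtain ⟨X, hX⟩ := toLoc_surj S hh i p hp q0'
      have hlift : (c.st ⟨i, p⟩, liftAct i l0, X) ∈ (MC S hh Kd).delta ⟨i, p⟩ := by
        refine (delta_loc_iff S hh Kd i p hp _ X _).mpr ?_
        exact ⟨l0, by rw [hX]; exact h, rfl⟩
      obtain ⟨⟨l', X', hl'⟩, hall⟩ := hrecv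
      exact hall _ _ hlift
    · intro s a0 q2 h
      rw [hlocp] at h
      obtain ⟨X, hX⟩ := toLoc_surj S hh i p hp q2
      have hlift : (c.st ⟨i, p⟩, Act.mk ⟨i, s⟩ ⟨i, p⟩ Dir.inp a0, X) ∈
          (MC S hh Kd).delta ⟨i, p⟩ := by
        refine (delta_loc_iff S hh Kd i p hp _ X _).mpr ?_
        exact ⟨Act.mk s p Dir.inp a0, by rw [hX]; exact h, rfl⟩
      have hb := hblk ⟨i, s⟩ a0 X hlift
      rw [hchS i s p]
      exact hb
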